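/- arXiv:2305.05897 — 5 statements merged into one kernel-verified Lean document; each statement's English description precedes it below -/
import Mathlib

section
/- Let x, z : ℝ → ℝ be twice differentiable at v with G(v) = x'(v)² + z'(v)² > 0. Then the derivative of the Gauss map in the meridian direction satisfies ∂N/∂v (u,v) = ((x'(v) z''(v) − x''(v) z'(v)) / G(v)^{3/2}) · φ_v(u,v) for every u, where φ_v(u,v) = (x'(v) cos u, x'(v) sin u, z'(v)). -/
open Real

noncomputable def vec3 (a b c : ℝ) : EuclideanSpace ℝ (Fin 3) :=
  (WithLp.equiv 2 (Fin 3 → ℝ)).symm ![a, b, c]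

lemma hasDerivAt_vec3 {p q r : ℝ → ℝ} {p' q' r' v : ℝ}
    (hp : HasDerivAt p p' v) (hq : HasDerivAt q q' v) (hr : HasDerivAt r r' v) :
    HasDerivAt (fun t => vec3 (p t) (q t) (r t)) (vec3 p' q' r') v := by
  have hpi : HasDerivAt (fun t => ![p t, q t, r t]) ![p', q', r'] v := by
    rw [hasDerivAt_pi]
    intro i
    fin_cases i <;> simpa
  have := ((EuclideanSpace.equiv (Fin 3) ℝ).symm :
      (Fin 3 → ℝ) →L[ℝ] EuclideanSpace ℝ (Fin 3)).hasFDerivAt.comp_hasDerivAt v hpi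
  exact this

lemma smul_vec3 (c a b d : ℝ) : c • vec3 a b d = vec3 (c * a) (c * b) (c * d) := by
  unfold vec3
  ext i
  fin_cases i <;> simp

lemma aux (a b : ℝ → ℝ) (a' b' : ℝ) (v : ℝ) (ha : HasDerivAt a a' v)
    (hb : HasDerivAt b b' v) (c : ℝ) (hG : 0 < a v ^ 2 + b v ^ 2) :
    HasDerivAt (fun t => (Real.sqrt (a t ^ 2 + b t ^ 2))⁻¹ * (b t * c))
      (((a v * b' - a' * b v) / (Real.sqrt (a v ^ 2 + b v ^ 2)) ^ 3) * (a v * c)) v := by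
  set s := Real.sqrt (a v ^ 2 + b v ^ 2) with hs
  have hspos : 0 < s := Real.sqrt_pos.mpr hG
  have hs2 : s ^ 2 = a v ^ 2 + b v ^ 2 := Real.sq_sqrt hG.le
  have hsq : HasDerivAt (fun t => Real.sqrt (a t ^ 2 + b t ^ 2))
      (1 / (2 * s) * (2 * a v ^ 1 * a' + 2 * b v ^ 1 * b')) v :=
    (Real.hasDerivAt_sqrt hG.ne').comp v ((ha.pow 2).add (hb.pow 2))
  have hinv := hsq.inv hspos.ne'
  have h := hinv.mul (hb.mul_const c)
  refine h.congr_deriv ?_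
  rw [Pi.inv_apply, ← hs]
  field_simp
  linear_combination c * b' * hs2

/-- For the surface of revolution φ(u,v) = (x(v) cos u, x(v) sin u, z(v)) with Gauss map
`N(u,v) = G(v)^{−1/2}·(z'(v) cos u, z'(v) sin u, −x'(v))`, `G(v) = x'(v)² + z'(v)²`, if `x, z`
are twice differentiable at `v` and `G(v) > 0`, then for every `u`
`∂N/∂v (u,v) = ((x'(v) z''(v) − x''(v) z'(v)) / G(v)^{3/2}) · φ_v(u,v)`, where
`φ_v(u,v) = (x'(v) cos u, x'(v) sin u, z'(v))`. -/
theorem statement_3 (x z : ℝ → ℝ) (v : ℝ)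
    (hx : DifferentiableAt ℝ x v) (hx' : DifferentiableAt ℝ (deriv x) v)
    (hz : DifferentiableAt ℝ z v) (hz' : DifferentiableAt ℝ (deriv z) v)
    (hG : 0 < (deriv x v) ^ 2 + (deriv z v) ^ 2) :
    ∀ u : ℝ, HasDerivAt
      (fun v' => (Real.sqrt ((deriv x v') ^ 2 + (deriv z v') ^ 2))⁻¹ •
        vec3 (deriv z v' * cos u) (deriv z v' * sin u) (-(deriv x v')))
      (((deriv x v * deriv (deriv z) v - deriv (deriv x) v * deriv z v) /
          (Real.sqrt ((deriv x v) ^ 2 + (deriv z v) ^ 2)) ^ 3) •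
        vec3 (deriv x v * cos u) (deriv x v * sin u) (deriv z v)) v := by
  intro u
  set a := deriv x with ha
  set b := deriv z with hb
  set a' := deriv (deriv x) v
  set b' := deriv (deriv z) v
  have hda : HasDerivAt a a' v := hx'.hasDerivAt
  have hdb : HasDerivAt b b' v := hz'.hasDerivAt
  set k := (a v * b' - a' * b v) / (Real.sqrt (a v ^ 2 + b v ^ 2)) ^ 3 with hk
  have h1 := aux a b a' b' v hda hdb (cos u) hG
  have h2 := aux a b a' b' v hda hdb (sin u) hG
  have h3' := aux b a b' a' v hdb hda (-1) (by linarith)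
  have h3 : HasDerivAt (fun t => (Real.sqrt (a t ^ 2 + b t ^ 2))⁻¹ * (-(a t)))
      (k * b v) v := by
    have hfun : (fun t => (Real.sqrt (b t ^ 2 + a t ^ 2))⁻¹ * (a t * -1)) =
        fun t => (Real.sqrt (a t ^ 2 + b t ^ 2))⁻¹ * (-(a t)) := by
      funext t; rw [add_comm]; ring
    rw [hfun] at h3'
    convert h3' using 1
    rw [hk, add_comm (b v ^ 2)]
    ring
  have hmain := hasDerivAt_vec3 h1 h2 h3
  have hfun2 : (fun v' => (Real.sqrt ((a v') ^ 2 + (b v') ^ 2))⁻¹ •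
      vec3 (b v' * cos u) (b v' * sin u) (-(a v'))) =
      fun t => vec3 ((Real.sqrt (a t ^ 2 + b t ^ 2))⁻¹ * (b t * cos u))
        ((Real.sqrt (a t ^ 2 + b t ^ 2))⁻¹ * (b t * sin u))
        ((Real.sqrt (a t ^ 2 + b t ^ 2))⁻¹ * (-(a t))) := by
    funext t; rw [smul_vec3]
  rw [hfun2]
  have : k • vec3 (a v * cos u) (a v * sin u) (b v) =
      vec3 (k * (a v * cos u)) (k * (a v * sin u)) (k * b v) := smul_vec3 _ _ _ _
  rw [this]
  exact hmain
end

section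
/- Let x, z : ℝ → ℝ be twice differentiable at a with G(a) = x'(a)² + z'(a)² > 0, and suppose the signed curvature of the generating curve vanishes at a, i.e. x'(a) z''(a) − x''(a) z'(a) = 0. Then for every u the map v ↦ N(u,v) has vanishing derivative at v = a; in other words, every component of the Gauss map N satisfies the Neumann boundary condition along the boundary circle {φ(u,a) : u ∈ [0,2π]} of the domain Σ_{a,b} = {φ(u,v) : u ∈ [0,2π], v ∈ [a,b]}, whose outward unit conormal at that circle is proportional to φ_v(u,a). -/
open Real

lemma vec3_smul (r a b c : ℝ) : r • vec3 a b c = vec3 (r*a) (r*b) (r*c) := by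
  ext i; fin_cases i <;> simp [vec3] <;> ring

lemma vec3_add (a b c d e f : ℝ) : vec3 a b c + vec3 d e f = vec3 (a+d) (b+e) (c+f) := by
  ext i; fin_cases i <;> simp [vec3]

/-- For the surface of revolution φ(u,v) = (x(v) cos u, x(v) sin u, z(v)) with Gauss map
`N(u,v) = G(v)^{−1/2}·(z'(v) cos u, z'(v) sin u, −x'(v))`, `G(v) = x'(v)² + z'(v)²`: if `x, z`
are twice differentiable at `a`, `G(a) > 0`, and the signed curvature of the generating curve
vanishes at `a` (i.e. `x'(a) z''(a) − x''(a) z'(a) = 0`), then for every `u` the map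
`v ↦ N(u,v)` has vanishing derivative at `v = a`; i.e. every component of the Gauss map
satisfies the Neumann boundary condition along the boundary circle `{φ(u,a)}` of the domain
`Σ_{a,b}`, whose outward unit conormal there is proportional to `φ_v(u,a)`. -/
theorem statement_5 (x z : ℝ → ℝ) (a : ℝ)
    (hx : DifferentiableAt ℝ x a) (hx' : DifferentiableAt ℝ (deriv x) a)
    (hz : DifferentiableAt ℝ z a) (hz' : DifferentiableAt ℝ (deriv z) a)
    (hG : 0 < (deriv x a) ^ 2 + (deriv z a) ^ 2)
    (hcurv : deriv x a * deriv (deriv z) a - deriv (deriv x) a * deriv z a = 0) :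
    ∀ u : ℝ, HasDerivAt
      (fun v => (Real.sqrt ((deriv x v) ^ 2 + (deriv z v) ^ 2))⁻¹ •
        vec3 (deriv z v * cos u) (deriv z v * sin u) (-(deriv x v)))
      0 a := by
  intro u
  set X := deriv x a with hX
  set Z := deriv z a with hZ
  set X2 := deriv (deriv x) a
  set Z2 := deriv (deriv z) a
  have hGne : X ^ 2 + Z ^ 2 ≠ 0 := ne_of_gt hG
  have hs : (0:ℝ) < Real.sqrt (X ^ 2 + Z ^ 2) := Real.sqrt_pos.2 hG
  set s := Real.sqrt (X ^ 2 + Z ^ 2) with hsdef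
  have hs2 : s ^ 2 = X ^ 2 + Z ^ 2 := Real.sq_sqrt hG.le
  have hGd : HasDerivAt (fun v => (deriv x v) ^ 2 + (deriv z v) ^ 2)
      (2 * X ^ 1 * X2 + 2 * Z ^ 1 * Z2) a :=
    (hx'.hasDerivAt.pow 2).add (hz'.hasDerivAt.pow 2)
  have hsd : HasDerivAt (fun v => Real.sqrt ((deriv x v) ^ 2 + (deriv z v) ^ 2))
      ((2 * X ^ 1 * X2 + 2 * Z ^ 1 * Z2) / (2 * s)) a := hGd.sqrt hGne
  have hinv : HasDerivAt (fun v => (Real.sqrt ((deriv x v) ^ 2 + (deriv z v) ^ 2))⁻¹)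
      (-((2 * X ^ 1 * X2 + 2 * Z ^ 1 * Z2) / (2 * s)) / s ^ 2) a := hsd.inv (ne_of_gt hs)
  have h1 : HasDerivAt (fun v => (Real.sqrt ((deriv x v) ^ 2 + (deriv z v) ^ 2))⁻¹ * deriv z v)
      (-((2 * X ^ 1 * X2 + 2 * Z ^ 1 * Z2) / (2 * s)) / s ^ 2 * Z + s⁻¹ * Z2) a :=
    hinv.mul hz'.hasDerivAt
  have h2 : HasDerivAt (fun v => (Real.sqrt ((deriv x v) ^ 2 + (deriv z v) ^ 2))⁻¹ * deriv x v)
      (-((2 * X ^ 1 * X2 + 2 * Z ^ 1 * Z2) / (2 * s)) / s ^ 2 * X + s⁻¹ * X2) a :=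
    hinv.mul hx'.hasDerivAt
  have e1 : -((2 * X ^ 1 * X2 + 2 * Z ^ 1 * Z2) / (2 * s)) / s ^ 2 * Z + s⁻¹ * Z2 = 0 := by
    field_simp
    linear_combination X*hcurv + Z2*hs2
  have e2 : -((2 * X ^ 1 * X2 + 2 * Z ^ 1 * Z2) / (2 * s)) / s ^ 2 * X + s⁻¹ * X2 = 0 := by
    field_simp
    linear_combination (-Z)*hcurv + X2*hs2
  rw [e1] at h1; rw [e2] at h2
  have key := (h1.smul_const (vec3 (cos u) (sin u) 0)).add (h2.smul_const (vec3 0 0 (-1)))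
  simp only [zero_smul, add_zero] at key
  convert key using 2 with v
  case e'_4 => rfl
  case e'_5 => rfl
  case e'_6 => rfl
  simp only [Pi.add_apply]
  simp only [vec3_smul, vec3_add]
  ring_nf
end

section
/- Fix real parameters 0 < α < γ and define μ, β, δ, k, x, z as in the unduloid setup. Then z is differentiable on ℝ with z'(v) = μ·(αγ + x(v)²)/(2·x(v)) for all v, and in particular z'(v) > 0 for all v (so the generating curve v ↦ (x(v), z(v)) is a graph over the z-axis direction). -/
open Real

/-- The incomplete elliptic integral of the first kind,
`F(φ, k) = ∫₀^φ (1 − k² sin²θ)^{−1/2} dθ`. -/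
noncomputable def ellipticF (k φ : ℝ) : ℝ :=
  ∫ θ in (0:ℝ)..φ, (Real.sqrt (1 - k ^ 2 * Real.sin θ ^ 2))⁻¹

/-- The incomplete elliptic integral of the second kind,
`E(φ, k) = ∫₀^φ (1 − k² sin²θ)^{1/2} dθ`. -/
noncomputable def ellipticE (k φ : ℝ) : ℝ :=
  ∫ θ in (0:ℝ)..φ, Real.sqrt (1 - k ^ 2 * Real.sin θ ^ 2)

lemma aux_pos {k : ℝ} (hk : k ^ 2 < 1) (θ : ℝ) : 0 < 1 - k ^ 2 * Real.sin θ ^ 2 := by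
  nlinarith [Real.sin_sq_le_one θ, sq_nonneg k, sq_nonneg (Real.sin θ)]

lemma hasDerivAt_ellipticF {k : ℝ} (hk : k ^ 2 < 1) (φ : ℝ) :
    HasDerivAt (ellipticF k) ((Real.sqrt (1 - k ^ 2 * Real.sin φ ^ 2))⁻¹) φ := by
  have hc : Continuous fun θ : ℝ => (Real.sqrt (1 - k ^ 2 * Real.sin θ ^ 2))⁻¹ := by
    apply Continuous.inv₀
    · fun_prop
    · intro θ; exact (Real.sqrt_pos.mpr (aux_pos hk θ)).ne'
  exact intervalIntegral.integral_hasDerivAt_right (hc.intervalIntegrable _ _)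
    (hc.stronglyMeasurableAtFilter _ _) hc.continuousAt

lemma hasDerivAt_ellipticE (k : ℝ) (φ : ℝ) :
    HasDerivAt (ellipticE k) (Real.sqrt (1 - k ^ 2 * Real.sin φ ^ 2)) φ := by
  have hc : Continuous fun θ : ℝ => Real.sqrt (1 - k ^ 2 * Real.sin θ ^ 2) := by
    fun_prop
  exact intervalIntegral.integral_hasDerivAt_right (hc.intervalIntegrable _ _)
    (hc.stronglyMeasurableAtFilter _ _) hc.continuousAt

/-- In the unduloid setup with parameters `0 < α < γ`, the height function `z` is
differentiable on ℝ with `z'(v) = μ·(αγ + x(v)²)/(2·x(v))`, and in particular `z'(v) > 0`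
for all `v`. -/
theorem statement_8 (α γ : ℝ) (hα : 0 < α) (hαγ : α < γ)
    (μ β δ k : ℝ) (hμ : μ = 2 / (α + γ)) (hβ : β = (γ ^ 2 - α ^ 2) / 2)
    (hδ : δ = (γ ^ 2 + α ^ 2) / 2) (hk : k = Real.sqrt (γ ^ 2 - α ^ 2) / γ)
    (x z : ℝ → ℝ)
    (hx : ∀ v, x v = Real.sqrt (β * Real.sin (μ * v) + δ))
    (hz : ∀ v, z v = α * ellipticF k (μ * v / 2 - Real.pi / 4) +
      γ * ellipticE k (μ * v / 2 - Real.pi / 4)) :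
    ∀ v : ℝ, HasDerivAt z (μ * (α * γ + (x v) ^ 2) / (2 * x v)) v ∧
      0 < μ * (α * γ + (x v) ^ 2) / (2 * x v) := by
  have hγ : 0 < γ := hα.trans hαγ
  have hd : (0:ℝ) ≤ γ ^ 2 - α ^ 2 := by nlinarith
  have hk2eq : k ^ 2 = (γ ^ 2 - α ^ 2) / γ ^ 2 := by
    rw [hk, div_pow, Real.sq_sqrt hd]
  have hk2 : k ^ 2 < 1 := by
    rw [hk2eq, div_lt_one (by positivity)]; nlinarith
  have hμpos : 0 < μ := by rw [hμ]; positivity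
  intro v
  set φ : ℝ := μ * v / 2 - Real.pi / 4 with hφ
  set s : ℝ := Real.sqrt (1 - k ^ 2 * Real.sin φ ^ 2) with hsdef
  have hspos : 0 < s := Real.sqrt_pos.mpr (aux_pos hk2 φ)
  have hs2 : s ^ 2 = 1 - k ^ 2 * Real.sin φ ^ 2 := Real.sq_sqrt (aux_pos hk2 φ).le
  -- x v = γ * s
  have hxv : x v = γ * s := by
    rw [hx]
    have hsin : Real.sin (μ * v) = 1 - 2 * Real.sin φ ^ 2 := by
      have hmv : μ * v = 2 * φ + Real.pi / 2 := by rw [hφ]; ring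
      rw [hmv, Real.sin_add_pi_div_two, Real.cos_two_mul, Real.cos_sq']
      ring
    have harg : β * Real.sin (μ * v) + δ = (γ * s) ^ 2 := by
      rw [hsin, mul_pow, hs2, hk2eq, hβ, hδ]
      field_simp
      ring
    rw [harg, Real.sqrt_sq (by positivity)]
  -- derivative
  have hφd : HasDerivAt (fun v : ℝ => μ * v / 2 - Real.pi / 4) (μ / 2) v := by
    simpa using (((hasDerivAt_id v).const_mul μ).div_const 2).sub_const (Real.pi / 4)
  have hF : HasDerivAt (fun v : ℝ => ellipticF k (μ * v / 2 - Real.pi / 4))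
      (s⁻¹ * (μ / 2)) v := by
    have := (hasDerivAt_ellipticF hk2 φ).comp v hφd; exact this
  have hE : HasDerivAt (fun v : ℝ => ellipticE k (μ * v / 2 - Real.pi / 4))
      (s * (μ / 2)) v := by
    have := (hasDerivAt_ellipticE k φ).comp v hφd; exact this
  have hzfun : z = fun v : ℝ => α * ellipticF k (μ * v / 2 - Real.pi / 4) +
      γ * ellipticE k (μ * v / 2 - Real.pi / 4) := funext hz
  have hder : HasDerivAt z (α * (s⁻¹ * (μ / 2)) + γ * (s * (μ / 2))) v := by
    rw [hzfun]; exact (hF.const_mul α).add (hE.const_mul γ)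
  have hval : α * (s⁻¹ * (μ / 2)) + γ * (s * (μ / 2)) =
      μ * (α * γ + (x v) ^ 2) / (2 * x v) := by
    rw [hxv]
    field_simp
  refine ⟨hval ▸ hder, ?_⟩
  rw [hxv]
  have h1 : 0 < μ * (α * γ + (γ * s) ^ 2) := by positivity
  have h2 : 0 < 2 * (γ * s) := by positivity
  exact div_pos h1 h2
end

section
/- Fix real parameters 0 < α < γ and define μ, β, δ, k, x, z as in the unduloid setup. Then x and z are differentiable on ℝ and the generating curve of the unduloid is parametrized by arc length: x'(v)² + z'(v)² = 1 for every v ∈ ℝ. -/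
open Real

/-- In the unduloid setup with parameters `0 < α < γ`, the functions `x` and `z` are
differentiable on ℝ and the generating curve is parametrized by arc length:
`x'(v)² + z'(v)² = 1` for every `v`. -/
theorem statement_9 (α γ : ℝ) (hα : 0 < α) (hαγ : α < γ)
    (μ β δ k : ℝ) (hμ : μ = 2 / (α + γ)) (hβ : β = (γ ^ 2 - α ^ 2) / 2)
    (hδ : δ = (γ ^ 2 + α ^ 2) / 2) (hk : k = Real.sqrt (γ ^ 2 - α ^ 2) / γ)
    (x z : ℝ → ℝ)
    (hx : ∀ v, x v = Real.sqrt (β * Real.sin (μ * v) + δ))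
    (hz : ∀ v, z v = α * ellipticF k (μ * v / 2 - Real.pi / 4) +
      γ * ellipticE k (μ * v / 2 - Real.pi / 4)) :
    Differentiable ℝ x ∧ Differentiable ℝ z ∧
      ∀ v : ℝ, (deriv x v) ^ 2 + (deriv z v) ^ 2 = 1 := by
  have hγ : 0 < γ := hα.trans hαγ
  have hβpos : 0 < β := by rw [hβ]; nlinarith
  have hk2 : k ^ 2 = (γ ^ 2 - α ^ 2) / γ ^ 2 := by
    rw [hk, div_pow, Real.sq_sqrt (by nlinarith)]
  have hkey : ∀ θ : ℝ, 0 < 1 - k ^ 2 * Real.sin θ ^ 2 := by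
    intro θ
    have h1 : Real.sin θ ^ 2 ≤ 1 := sin_sq_le_one θ
    have hk2' : k ^ 2 < 1 := by
      rw [hk2, div_lt_one (by positivity)]; nlinarith
    nlinarith [sq_nonneg (Real.sin θ), sq_nonneg k]
  -- continuity of integrands
  have hc2 : Continuous (fun θ : ℝ => Real.sqrt (1 - k ^ 2 * Real.sin θ ^ 2)) := by
    fun_prop
  have hc1 : Continuous (fun θ : ℝ => (Real.sqrt (1 - k ^ 2 * Real.sin θ ^ 2))⁻¹) :=
    hc2.inv₀ fun θ => (Real.sqrt_pos.mpr (hkey θ)).ne'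
  -- FTC derivatives
  have hF : ∀ φ : ℝ, HasDerivAt (ellipticF k)
      ((Real.sqrt (1 - k ^ 2 * Real.sin φ ^ 2))⁻¹) φ := by
    intro φ
    exact intervalIntegral.integral_hasDerivAt_right (hc1.intervalIntegrable _ _)
      (hc1.stronglyMeasurableAtFilter _ _) hc1.continuousAt
  have hE : ∀ φ : ℝ, HasDerivAt (ellipticE k)
      (Real.sqrt (1 - k ^ 2 * Real.sin φ ^ 2)) φ := by
    intro φ
    exact intervalIntegral.integral_hasDerivAt_right (hc2.intervalIntegrable _ _)
      (hc2.stronglyMeasurableAtFilter _ _) hc2.continuousAt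
  -- positivity of inner function of x
  have hinner : ∀ v : ℝ, 0 < β * Real.sin (μ * v) + δ := by
    intro v
    have h1 : -1 ≤ Real.sin (μ * v) := neg_one_le_sin _
    have : δ - β = α ^ 2 := by rw [hβ, hδ]; ring
    nlinarith
  -- derivative of x
  have hdx : ∀ v : ℝ, HasDerivAt x
      (1 / (2 * Real.sqrt (β * Real.sin (μ * v) + δ)) * (β * (Real.cos (μ * v) * μ))) v := by
    intro v
    have hg : HasDerivAt (fun v : ℝ => β * Real.sin (μ * v) + δ)
        (β * (Real.cos (μ * v) * μ)) v := by
      have h1 : HasDerivAt (fun v : ℝ => μ * v) μ v := by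
        simpa using (hasDerivAt_id v).const_mul μ
      exact (((Real.hasDerivAt_sin (μ * v)).comp v h1).const_mul β).add_const δ
    have := (Real.hasDerivAt_sqrt (hinner v).ne').comp v hg
    have hxeq : x = fun v => Real.sqrt (β * Real.sin (μ * v) + δ) := funext hx
    rw [hxeq]
    exact this
  -- derivative of z
  have hdz : ∀ v : ℝ, HasDerivAt z
      (α * ((Real.sqrt (1 - k ^ 2 * Real.sin (μ * v / 2 - π / 4) ^ 2))⁻¹ * (μ / 2)) +
       γ * (Real.sqrt (1 - k ^ 2 * Real.sin (μ * v / 2 - π / 4) ^ 2) * (μ / 2))) v := by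
    intro v
    have hφ : HasDerivAt (fun v : ℝ => μ * v / 2 - π / 4) (μ / 2) v := by
      have h1 : HasDerivAt (fun v : ℝ => μ * v) μ v := by
        simpa using (hasDerivAt_id v).const_mul μ
      simpa using (h1.div_const 2).sub_const (π / 4)
    have hzeq : z = fun v => α * ellipticF k (μ * v / 2 - π / 4) +
        γ * ellipticE k (μ * v / 2 - π / 4) := funext hz
    rw [hzeq]
    exact ((((hF _).comp v hφ).const_mul α).add (((hE _).comp v hφ).const_mul γ))
  refine ⟨fun v => (hdx v).differentiableAt, fun v => (hdz v).differentiableAt, fun v => ?_⟩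
  rw [(hdx v).deriv, (hdz v).deriv]
  set s := Real.sin (μ * v) with hs
  set w := Real.sqrt (β * s + δ) with hwdef
  have hwpos : 0 < w := Real.sqrt_pos.mpr (hinner v)
  have hw2 : w ^ 2 = β * s + δ := Real.sq_sqrt (hinner v).le
  have hsinφ : Real.sin (μ * v / 2 - π / 4) ^ 2 = (1 - s) / 2 := by
    rw [sin_sq_eq_half_sub]
    have : 2 * (μ * v / 2 - π / 4) = μ * v - π / 2 := by ring
    rw [this, Real.cos_sub_pi_div_two]
    ring
  have hsq : Real.sqrt (1 - k ^ 2 * Real.sin (μ * v / 2 - π / 4) ^ 2) = w / γ := by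
    have h1 : 1 - k ^ 2 * Real.sin (μ * v / 2 - π / 4) ^ 2 = (w / γ) ^ 2 := by
      rw [hsinφ, hk2, div_pow, hw2, hβ, hδ]
      field_simp
      ring
    rw [h1, Real.sqrt_sq (by positivity)]
  rw [hsq, inv_div]
  have hcos : Real.cos (μ * v) ^ 2 = 1 - s ^ 2 := Real.cos_sq' _
  have hαγ' : (0:ℝ) < α + γ := by linarith
  set c := Real.cos (μ * v) with hc
  clear_value s w c
  subst hμ hβ hδ
  have hw0 : w ≠ 0 := hwpos.ne'
  field_simp
  linear_combination ((γ^2-α^2)^2) * hcos +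
    (4*(w^2 + (γ^2-α^2)/2*s + (γ^2+α^2)/2 - α^2 - γ^2)) * hw2
end

section
/- Fix real parameters 0 < α < γ and define μ, β, δ, k, x, z as in the unduloid setup. Then x and z are twice differentiable on ℝ and the signed curvature of the (unit-speed) generating curve of the unduloid satisfies, for every v ∈ ℝ: x'(v) z''(v) − x''(v) z'(v) = (x(v)² − αγ)/((α+γ)·x(v)²) = (γ−α)·[(γ−α) + (γ+α) sin(μv)] / (2(γ+α)·x(v)²). -/
open Real

set_option maxHeartbeats 1000000 in
/-- In the unduloid setup with parameters `0 < α < γ`, the functions `x` and `z` are twice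
differentiable on ℝ and the signed curvature of the (unit-speed) generating curve satisfies
`x'z'' − x''z' = (x² − αγ)/((α+γ)x²) = (γ−α)·[(γ−α) + (γ+α) sin(μv)]/(2(γ+α)x²)`. -/
theorem statement_10 (α γ : ℝ) (hα : 0 < α) (hαγ : α < γ)
    (μ β δ k : ℝ) (hμ : μ = 2 / (α + γ)) (hβ : β = (γ ^ 2 - α ^ 2) / 2)
    (hδ : δ = (γ ^ 2 + α ^ 2) / 2) (hk : k = Real.sqrt (γ ^ 2 - α ^ 2) / γ)
    (x z : ℝ → ℝ)
    (hx : ∀ v, x v = Real.sqrt (β * Real.sin (μ * v) + δ))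
    (hz : ∀ v, z v = α * ellipticF k (μ * v / 2 - Real.pi / 4) +
      γ * ellipticE k (μ * v / 2 - Real.pi / 4)) :
    Differentiable ℝ x ∧ Differentiable ℝ (deriv x) ∧
    Differentiable ℝ z ∧ Differentiable ℝ (deriv z) ∧
    ∀ v : ℝ,
      deriv x v * deriv (deriv z) v - deriv (deriv x) v * deriv z v =
        ((x v) ^ 2 - α * γ) / ((α + γ) * (x v) ^ 2) ∧
      deriv x v * deriv (deriv z) v - deriv (deriv x) v * deriv z v =
        (γ - α) * ((γ - α) + (γ + α) * Real.sin (μ * v)) /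
          (2 * (γ + α) * (x v) ^ 2) := by
  have hγ : 0 < γ := hα.trans hαγ
  have hag : 0 < α + γ := by linarith
  have hβpos : 0 < β := by rw [hβ]; nlinarith
  have hX : ∀ v : ℝ, 0 < β * Real.sin (μ * v) + δ := by
    intro v
    have h1 := Real.neg_one_le_sin (μ * v)
    have h2 := Real.sin_le_one (μ * v)
    rw [hβ, hδ]
    nlinarith
  have hxpos : ∀ v, 0 < x v := fun v => by
    rw [hx v]; exact Real.sqrt_pos.2 (hX v)
  have hx2 : ∀ v, (x v) ^ 2 = β * Real.sin (μ * v) + δ := fun v => by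
    rw [hx v, Real.sq_sqrt (hX v).le]
  have hk2 : k ^ 2 = (γ ^ 2 - α ^ 2) / γ ^ 2 := by
    rw [hk, div_pow, Real.sq_sqrt (by nlinarith)]
  have hWpos : ∀ θ : ℝ, 0 < 1 - k ^ 2 * Real.sin θ ^ 2 := by
    intro θ
    have h1 : Real.sin θ ^ 2 ≤ 1 := Real.sin_sq_le_one θ
    have h2 : 0 ≤ Real.sin θ ^ 2 := sq_nonneg _
    have h3 : k ^ 2 < 1 := by
      rw [hk2, div_lt_one (by positivity)]; nlinarith
    have h4 : 0 ≤ k ^ 2 := sq_nonneg _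
    nlinarith
  -- derivatives of the elliptic integrals
  have hcE : Continuous (fun θ : ℝ => Real.sqrt (1 - k ^ 2 * Real.sin θ ^ 2)) := by
    fun_prop
  have hsne : ∀ θ : ℝ, Real.sqrt (1 - k ^ 2 * Real.sin θ ^ 2) ≠ 0 := fun θ =>
    (Real.sqrt_pos.2 (hWpos θ)).ne'
  have hcF : Continuous (fun θ : ℝ => (Real.sqrt (1 - k ^ 2 * Real.sin θ ^ 2))⁻¹) :=
    hcE.inv₀ hsne
  have hdF : ∀ φ : ℝ, HasDerivAt (ellipticF k)
      ((Real.sqrt (1 - k ^ 2 * Real.sin φ ^ 2))⁻¹) φ := fun φ =>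
    (hcF.integral_hasStrictDerivAt 0 φ).hasDerivAt
  have hdE : ∀ φ : ℝ, HasDerivAt (ellipticE k)
      (Real.sqrt (1 - k ^ 2 * Real.sin φ ^ 2)) φ := fun φ =>
    (hcE.integral_hasStrictDerivAt 0 φ).hasDerivAt
  -- the key substitution
  have hsub : ∀ v : ℝ, 1 - k ^ 2 * Real.sin (μ * v / 2 - Real.pi / 4) ^ 2
      = (x v) ^ 2 / γ ^ 2 := by
    intro v
    have h1 : Real.sin (μ * v / 2 - Real.pi / 4) ^ 2
        = 1 - Real.cos (μ * v / 2 - Real.pi / 4) ^ 2 := Real.sin_sq _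
    have h2 : Real.cos (μ * v / 2 - Real.pi / 4) ^ 2
        = 1 / 2 + Real.cos (2 * (μ * v / 2 - Real.pi / 4)) / 2 := Real.cos_sq _
    have h3 : (2 : ℝ) * (μ * v / 2 - Real.pi / 4) = μ * v - Real.pi / 2 := by ring
    have h4 : Real.cos (μ * v - Real.pi / 2) = Real.sin (μ * v) :=
      Real.cos_sub_pi_div_two _
    rw [h1, h2, h3, h4, hx2 v, hk2, hβ, hδ]
    field_simp
    ring
  have hsqsub : ∀ v : ℝ,
      Real.sqrt (1 - k ^ 2 * Real.sin (μ * v / 2 - Real.pi / 4) ^ 2) = x v / γ := by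
    intro v
    rw [hsub v, show (x v) ^ 2 / γ ^ 2 = (x v / γ) ^ 2 by ring,
      Real.sqrt_sq (div_nonneg (hxpos v).le hγ.le)]
  -- first derivative of x
  have hdx : ∀ v : ℝ, HasDerivAt x (β * μ * Real.cos (μ * v) / (2 * x v)) v := by
    intro v
    have hμv : HasDerivAt (fun v : ℝ => μ * v) μ v := by
      simpa using (hasDerivAt_id v).const_mul μ
    have h1 : HasDerivAt (fun v : ℝ => β * Real.sin (μ * v) + δ)
        (β * (Real.cos (μ * v) * μ)) v :=
      (((Real.hasDerivAt_sin (μ * v)).comp v hμv).const_mul β).add_const δ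
    have h2 := h1.sqrt (hX v).ne'
    have hxx : x = fun v => Real.sqrt (β * Real.sin (μ * v) + δ) := funext hx
    rw [hxx]
    convert h2 using 1
    show β * μ * Real.cos (μ * v) / (2 * Real.sqrt (β * Real.sin (μ * v) + δ)) = _
    ring
  -- first derivative of z
  have hdz : ∀ v : ℝ, HasDerivAt z ((α * γ / x v + x v) / (α + γ)) v := by
    intro v
    have hφ : HasDerivAt (fun v : ℝ => μ * v / 2 - Real.pi / 4) (μ / 2) v := by
      simpa using (((hasDerivAt_id v).const_mul μ).div_const 2).sub_const (Real.pi / 4)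
    have h1 := (((hdF _).comp v hφ).const_mul α).add (((hdE _).comp v hφ).const_mul γ)
    have hzz : z = fun v => α * ellipticF k (μ * v / 2 - Real.pi / 4) +
        γ * ellipticE k (μ * v / 2 - Real.pi / 4) := funext hz
    rw [hzz]
    refine h1.congr_deriv ?_
    rw [hsqsub v, hμ]
    have hxne := (hxpos v).ne'
    field_simp
  have hderivx : deriv x = fun v => β * μ * Real.cos (μ * v) / (2 * x v) :=
    funext fun v => (hdx v).deriv
  have hderivz : deriv z = fun v => (α * γ / x v + x v) / (α + γ) :=
    funext fun v => (hdz v).deriv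
  -- second derivative of x
  have hdx2 : ∀ v : ℝ, HasDerivAt (deriv x)
      ((β * μ * (-Real.sin (μ * v) * μ) * (2 * x v) -
        β * μ * Real.cos (μ * v) * (2 * (β * μ * Real.cos (μ * v) / (2 * x v)))) /
        (2 * x v) ^ 2) v := by
    intro v
    rw [hderivx]
    have hμv : HasDerivAt (fun v : ℝ => μ * v) μ v := by
      simpa using (hasDerivAt_id v).const_mul μ
    have hN : HasDerivAt (fun v : ℝ => β * μ * Real.cos (μ * v))
        (β * μ * (-Real.sin (μ * v) * μ)) v :=
      ((Real.hasDerivAt_cos (μ * v)).comp v hμv).const_mul (β * μ)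
    have hD : HasDerivAt (fun v : ℝ => 2 * x v)
        (2 * (β * μ * Real.cos (μ * v) / (2 * x v))) v := (hdx v).const_mul 2
    exact hN.div hD (mul_pos two_pos (hxpos v)).ne'
  -- second derivative of z
  have hdz2 : ∀ v : ℝ, HasDerivAt (deriv z)
      (((0 * x v - α * γ * (β * μ * Real.cos (μ * v) / (2 * x v))) / (x v) ^ 2 +
        β * μ * Real.cos (μ * v) / (2 * x v)) / (α + γ)) v := by
    intro v
    rw [hderivz]
    have h1 : HasDerivAt (fun v : ℝ => α * γ / x v)
        ((0 * x v - α * γ * (β * μ * Real.cos (μ * v) / (2 * x v))) / (x v) ^ 2) v :=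
      (hasDerivAt_const v (α * γ)).div (hdx v) (hxpos v).ne'
    exact (h1.add (hdx v)).div_const (α + γ)
  refine ⟨fun v => (hdx v).differentiableAt, fun v => (hdx2 v).differentiableAt,
    fun v => (hdz v).differentiableAt, fun v => (hdz2 v).differentiableAt, fun v => ?_⟩
  have Ex' : deriv x v = β * μ * Real.cos (μ * v) / (2 * x v) := (hdx v).deriv
  have Ez' : deriv z v = (α * γ / x v + x v) / (α + γ) := (hdz v).deriv
  have Ex'' := (hdx2 v).deriv
  have Ez'' := (hdz2 v).deriv
  rw [Ex', Ez', Ex'', Ez'']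
  have hxne := (hxpos v).ne'
  have hc2 : Real.cos (μ * v) ^ 2 = 1 - Real.sin (μ * v) ^ 2 := Real.cos_sq' _
  have key : β * μ * Real.cos (μ * v) / (2 * x v) *
        (((0 * x v - α * γ * (β * μ * Real.cos (μ * v) / (2 * x v))) / x v ^ 2 +
          β * μ * Real.cos (μ * v) / (2 * x v)) / (α + γ)) -
      (β * μ * (-Real.sin (μ * v) * μ) * (2 * x v) -
        β * μ * Real.cos (μ * v) * (2 * (β * μ * Real.cos (μ * v) / (2 * x v)))) /
          (2 * x v) ^ 2 *
        ((α * γ / x v + x v) / (α + γ)) =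
      2 * μ ^ 2 * β * (β * Real.cos (μ * v) ^ 2 +
          Real.sin (μ * v) * (α * γ + (x v) ^ 2)) /
        (4 * (α + γ) * (x v) ^ 2) := by
    field_simp
    ring
  have hne := (hX v).ne'
  rw [key, hc2, hx2 v]
  obtain ⟨s, hsv⟩ : ∃ s, Real.sin (μ * v) = s := ⟨_, rfl⟩
  rw [hsv] at hne ⊢
  rw [hβ, hδ] at hne
  rw [hμ, hβ, hδ]
  have hagne : α + γ ≠ 0 := hag.ne'
  have hgane : γ + α ≠ 0 := by intro h; apply hagne; linarith
  constructor
  · rw [div_eq_div_iff (mul_ne_zero (mul_ne_zero (by norm_num) hagne) hne)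
      (mul_ne_zero hagne hne)]
    field_simp
    ring
  · rw [div_eq_div_iff (mul_ne_zero (mul_ne_zero (by norm_num) hagne) hne)
      (mul_ne_zero (mul_ne_zero (by norm_num) hgane) hne)]
    field_simp
    ring
end
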